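/- arXiv:1705.09048 — 2 statements merged into one kernel-verified Lean document; each statement's English description precedes it below -/
import Mathlib

section
/- Suppose U : ℝᵈ → ℝ is m-strongly convex and L-smooth with minimizer at 0 and U(0) = 0, let p* ∝ e^{-U}, and p₀ = N(0, (1/m)I). Then KL(p₀ ‖ p*) ≤ dL/m. -/
open MeasureTheory Real Filter
open scoped RealInnerProductSpace



-- comparison lemma
lemma le_of_deriv_le {f g f' g' : ℝ → ℝ}
    (hf : ∀ t, HasDerivAt f (f' t) t) (hg : ∀ t, HasDerivAt g (g' t) t)
    (h0 : f 0 = g 0) (hle : ∀ t, 0 ≤ t → f' t ≤ g' t) :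
    ∀ t, 0 ≤ t → f t ≤ g t := by
  intro t ht
  have hmono : MonotoneOn (fun t => g t - f t) (Set.Ici (0:ℝ)) := by
    apply monotoneOn_of_deriv_nonneg (convex_Ici 0)
    · exact (Continuous.continuousOn (by
        have : Differentiable ℝ (fun t => g t - f t) :=
          fun t => ((hg t).sub (hf t)).differentiableAt
        exact this.continuous))
    · intro t _
      exact (((hg t).sub (hf t)).differentiableAt).differentiableWithinAt
    · intro s hs
      rw [interior_Ici] at hs
      rw [show (fun t => g t - f t) = g - f from rfl, ((hg s).sub (hf s)).deriv]
      exact sub_nonneg.mpr (hle s (le_of_lt hs))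
  have := hmono (Set.self_mem_Ici) (Set.mem_Ici.mpr ht) ht
  simp only at this
  linarith [this, h0]

variable {d : ℕ}

lemma quad_bounds (U : EuclideanSpace ℝ (Fin d) → ℝ)
    (g : EuclideanSpace ℝ (Fin d) → EuclideanSpace ℝ (Fin d))
    (H : EuclideanSpace ℝ (Fin d) → EuclideanSpace ℝ (Fin d) →L[ℝ] EuclideanSpace ℝ (Fin d))
    (m L : ℝ)
    (hgrad : ∀ x, HasGradientAt U (g x) x)
    (hhess : ∀ x, HasFDerivAt g (H x) x)
    (hlow : ∀ x v, m * ‖v‖ ^ 2 ≤ ⟪H x v, v⟫)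
    (hup : ∀ x v, ⟪H x v, v⟫ ≤ L * ‖v‖ ^ 2)
    (hU0 : U 0 = 0) (hg0 : g 0 = 0) (x : EuclideanSpace ℝ (Fin d)) :
    m / 2 * ‖x‖ ^ 2 ≤ U x ∧ U x ≤ L / 2 * ‖x‖ ^ 2 := by
  have hline : ∀ t : ℝ, HasDerivAt (fun t : ℝ => t • x) x t := by
    intro t
    simpa using (hasDerivAt_id t).smul_const x
  have hφ : ∀ t : ℝ, HasDerivAt (fun t : ℝ => U (t • x)) ⟪g (t • x), x⟫ t := by
    intro t
    have := ((hgrad (t • x)).hasFDerivAt).comp_hasDerivAt t (hline t)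
    simpa [InnerProductSpace.toDual_apply_apply, Function.comp_def] using this
  have hφ₁ : ∀ t : ℝ, HasDerivAt (fun t : ℝ => ⟪g (t • x), x⟫) ⟪H (t • x) x, x⟫ t := by
    intro t
    have hc : HasDerivAt (fun t : ℝ => g (t • x)) (H (t • x) x) t :=
      (hhess (t • x)).comp_hasDerivAt t (hline t)
    have hconst : HasDerivAt (fun _ : ℝ => x) (0 : EuclideanSpace ℝ (Fin d)) t :=
      hasDerivAt_const t x
    have := HasDerivAt.inner ℝ hc hconst
    simpa using this
  -- first level: bounds on the derivative
  have hupper₁ : ∀ t, 0 ≤ t → ⟪g (t • x), x⟫ ≤ L * ‖x‖ ^ 2 * t := by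
    apply le_of_deriv_le hφ₁ (fun t => by
      simpa using (hasDerivAt_id t).const_mul (L * ‖x‖ ^ 2))
    · simp [hg0]
    · intro t ht; exact hup _ _
  have hlower₁ : ∀ t, 0 ≤ t → m * ‖x‖ ^ 2 * t ≤ ⟪g (t • x), x⟫ := by
    apply le_of_deriv_le (fun t => by
      simpa using (hasDerivAt_id t).const_mul (m * ‖x‖ ^ 2)) hφ₁
    · simp [hg0]
    · intro t ht; exact hlow _ _
  -- second level
  have hq : ∀ (c t : ℝ), HasDerivAt (fun t : ℝ => c * t ^ 2) (c * (2 * t ^ 1)) t := by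
    intro c t
    exact (hasDerivAt_pow 2 t).const_mul c
  have hupper : ∀ t, 0 ≤ t → U (t • x) ≤ L / 2 * ‖x‖ ^ 2 * t ^ 2 := by
    apply le_of_deriv_le hφ (hq (L / 2 * ‖x‖ ^ 2))
    · simp [hU0]
    · intro t ht
      calc ⟪g (t • x), x⟫ ≤ L * ‖x‖ ^ 2 * t := hupper₁ t ht
        _ = L / 2 * ‖x‖ ^ 2 * (2 * t ^ 1) := by ring
  have hlower : ∀ t, 0 ≤ t → m / 2 * ‖x‖ ^ 2 * t ^ 2 ≤ U (t • x) := by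
    apply le_of_deriv_le (hq (m / 2 * ‖x‖ ^ 2)) hφ
    · simp [hU0]
    · intro t ht
      calc m / 2 * ‖x‖ ^ 2 * (2 * t ^ 1) = m * ‖x‖ ^ 2 * t := by ring
        _ ≤ ⟪g (t • x), x⟫ := hlower₁ t ht
  have h1 := hupper 1 zero_le_one
  have h2 := hlower 1 zero_le_one
  simp only [one_smul, one_pow, mul_one] at h1 h2
  exact ⟨h2, h1⟩

variable {d : ℕ}

lemma integrable_sq_mul_exp_neg_mul_sq {b : ℝ} (hb : 0 < b) :
    Integrable fun x : ℝ => x ^ 2 * exp (-b * x ^ 2) := by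
  have := integrable_rpow_mul_exp_neg_mul_sq hb (s := 2) (by norm_num)
  simp only [show ∀ x : ℝ, x ^ (2:ℝ) = x ^ 2 from fun x => by
    rw [← Real.rpow_natCast x 2]; norm_num] at this
  exact this

lemma integral_sq_mul_exp_neg_mul_sq {b : ℝ} (hb : 0 < b) :
    ∫ x : ℝ, x ^ 2 * exp (-b * x ^ 2) = √(π / b) / (2 * b) := by
  have hbne : (2 : ℝ) * b ≠ 0 := by positivity
  set f : ℝ → ℝ := fun x => -(x / (2 * b)) * exp (-b * x ^ 2) with hf
  have hderiv : ∀ x : ℝ, HasDerivAt f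
      (x ^ 2 * exp (-b * x ^ 2) - (1 / (2 * b)) * exp (-b * x ^ 2)) x := by
    intro x
    have h1 : HasDerivAt (fun x : ℝ => -(x / (2 * b))) (-(1 / (2 * b))) x := by
      simpa [Pi.neg_def] using ((hasDerivAt_id x).div_const (2 * b)).neg
    have h2 : HasDerivAt (fun x : ℝ => exp (-b * x ^ 2)) (-b * (2 * x) * exp (-b * x ^ 2)) x := by
      simpa [mul_comm] using (((hasDerivAt_pow 2 x).const_mul (-b)).exp)
    have : HasDerivAt f _ x := h1.mul h2
    convert this using 1
    field_simp [hb.ne']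
    ring
  have hint : Integrable fun x : ℝ =>
      x ^ 2 * exp (-b * x ^ 2) - (1 / (2 * b)) * exp (-b * x ^ 2) :=
    (integrable_sq_mul_exp_neg_mul_sq hb).sub ((integrable_exp_neg_mul_sq hb).const_mul _)
  -- limits
  have hlim : Tendsto (fun x : ℝ => x * exp (-b * x ^ 2)) atTop (nhds 0) := by
    have h := rpow_mul_exp_neg_mul_sq_isLittleO_exp_neg hb 1
    have h2 : Tendsto (fun x : ℝ => exp (-(1/2) * x)) atTop (nhds 0) :=
      tendsto_exp_atBot.comp (tendsto_id.const_mul_atTop_of_neg (by norm_num))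
    have := h.trans_tendsto h2
    simpa [Real.rpow_one] using this
  have htop : Tendsto f atTop (nhds 0) := by
    have := hlim.const_mul (-(1 / (2 * b)))
    refine (this.congr (fun x => by rw [hf]; ring)).mono_right (by simp)
  have hbot : Tendsto f atBot (nhds 0) := by
    have h := htop.comp tendsto_neg_atBot_atTop
    have : (f ∘ Neg.neg) = fun x => -f x := by
      funext x; simp [hf, Function.comp]; ring
    rw [this] at h
    simpa using h.neg
  have key := integral_of_hasDerivAt_of_tendsto hderiv hint hbot htop
  rw [integral_sub (integrable_sq_mul_exp_neg_mul_sq hb)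
    ((integrable_exp_neg_mul_sq hb).const_mul _)] at key
  rw [integral_const_mul, integral_gaussian] at key
  have : (∫ x : ℝ, x ^ 2 * exp (-b * x ^ 2)) = 1 / (2 * b) * √(π / b) := by linarith
  rw [this]; ring


lemma pi_form {b : ℝ} (i : Fin d) (y : Fin d → ℝ) :
    (∏ j, ((if j = i then (y j) ^ 2 else 1) * exp (-b * (y j) ^ 2)))
      = (y i) ^ 2 * exp (-b * ∑ j, (y j) ^ 2) := by
  rw [Finset.prod_mul_distrib, ← Real.exp_sum]
  congr 1
  · simp
  · congr 1; rw [Finset.mul_sum]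

lemma norm_sq_eq (x : EuclideanSpace ℝ (Fin d)) : ‖x‖ ^ 2 = ∑ i, (x i) ^ 2 := by
  rw [EuclideanSpace.norm_eq, Real.sq_sqrt (by positivity)]
  simp [Real.norm_eq_abs, sq_abs]

lemma G_integrable {b : ℝ} (hb : 0 < b) (i : Fin d) :
    Integrable (fun y : Fin d → ℝ =>
      ∏ j, ((if j = i then (y j) ^ 2 else 1) * exp (-b * (y j) ^ 2))) := by
  apply Integrable.fintype_prod
    (f := fun j (t : ℝ) => (if j = i then t ^ 2 else 1) * exp (-b * t ^ 2))
  intro j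
  by_cases h : j = i
  · simp only [if_pos h]; exact integrable_sq_mul_exp_neg_mul_sq hb
  · simp only [if_neg h, one_mul]; exact integrable_exp_neg_mul_sq hb

lemma integrable_exp_neg_mul_sq_norm {b : ℝ} (hb : 0 < b) :
    Integrable fun x : EuclideanSpace ℝ (Fin d) => exp (-b * ‖x‖ ^ 2) := by
  have hmp := (EuclideanSpace.volume_preserving_symm_measurableEquiv_toLp (Fin d)).symm
  rw [← hmp.integrable_comp_emb (MeasurableEquiv.measurableEmbedding _)]
  have : (fun x : EuclideanSpace ℝ (Fin d) => exp (-b * ‖x‖ ^ 2)) ∘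
      (MeasurableEquiv.toLp 2 (Fin d → ℝ)).symm.symm
      = fun y : Fin d → ℝ => ∏ j, exp (-b * (y j) ^ 2) := by
    funext y
    simp only [Function.comp_apply, norm_sq_eq, ← Real.exp_sum]
    congr 1
    rw [Finset.mul_sum]
    rfl
  rw [this]
  exact Integrable.fintype_prod (fun i => integrable_exp_neg_mul_sq hb)

lemma integrable_sq_norm_mul_exp {b : ℝ} (hb : 0 < b) :
    Integrable fun x : EuclideanSpace ℝ (Fin d) => ‖x‖ ^ 2 * exp (-b * ‖x‖ ^ 2) := by
  have hmp := (EuclideanSpace.volume_preserving_symm_measurableEquiv_toLp (Fin d)).symm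
  rw [← hmp.integrable_comp_emb (MeasurableEquiv.measurableEmbedding _)]
  have : (fun x : EuclideanSpace ℝ (Fin d) => ‖x‖ ^ 2 * exp (-b * ‖x‖ ^ 2)) ∘
      (MeasurableEquiv.toLp 2 (Fin d → ℝ)).symm.symm
      = fun y : Fin d → ℝ => ∑ i, ∏ j, ((if j = i then (y j) ^ 2 else 1) * exp (-b * (y j) ^ 2)) := by
    funext y
    simp only [Function.comp_apply, norm_sq_eq, pi_form]
    rw [← Finset.sum_mul]
    rfl
  rw [this]
  exact integrable_finset_sum _ (fun i _ => G_integrable hb i)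

lemma integral_sq_norm_mul_exp {b : ℝ} (hb : 0 < b) :
    ∫ x : EuclideanSpace ℝ (Fin d), ‖x‖ ^ 2 * exp (-b * ‖x‖ ^ 2)
      = (d / (2 * b)) * (π / b) ^ ((d : ℝ) / 2) := by
  have hmp := (EuclideanSpace.volume_preserving_symm_measurableEquiv_toLp (Fin d)).symm
  rw [← hmp.integral_comp']
  have hcong : ∀ y : Fin d → ℝ,
      (fun x : EuclideanSpace ℝ (Fin d) => ‖x‖ ^ 2 * exp (-b * ‖x‖ ^ 2))
        ((MeasurableEquiv.toLp 2 (Fin d → ℝ)).symm.symm y)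
      = ∑ i, ∏ j, ((if j = i then (y j) ^ 2 else 1) * exp (-b * (y j) ^ 2)) := by
    intro y
    simp only [norm_sq_eq, pi_form]
    rw [← Finset.sum_mul]
    rfl
  rw [integral_congr_ae (Filter.Eventually.of_forall hcong)]
  rw [integral_finset_sum _ (fun i _ => G_integrable hb i)]
  have hterm : ∀ i : Fin d,
      (∫ y : Fin d → ℝ, ∏ j, ((if j = i then (y j) ^ 2 else 1) * exp (-b * (y j) ^ 2)))
      = (√(π / b) / (2 * b)) * (√(π / b)) ^ (d - 1) := by
    intro i
    rw [MeasureTheory.integral_fintype_prod_volume_eq_prod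
      (f := fun j (t : ℝ) => (if j = i then t ^ 2 else 1) * exp (-b * t ^ 2))]
    rw [← Finset.mul_prod_erase Finset.univ _ (Finset.mem_univ i)]
    rw [show (fun t : ℝ => (if i = i then t ^ 2 else 1) * exp (-b * t ^ 2))
        = fun t : ℝ => t ^ 2 * exp (-b * t ^ 2) by funext t; rw [if_pos rfl]]
    rw [integral_sq_mul_exp_neg_mul_sq hb]
    congr 1
    have hfac : ∀ j ∈ Finset.univ.erase i,
        (∫ t : ℝ, (if j = i then t ^ 2 else 1) * exp (-b * t ^ 2)) = √(π / b) := by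
      intro j hj
      rw [show (fun t : ℝ => (if j = i then t ^ 2 else 1) * exp (-b * t ^ 2))
          = fun t : ℝ => exp (-b * t ^ 2) by
        funext t; rw [if_neg (Finset.ne_of_mem_erase hj), one_mul]]
      exact integral_gaussian b
    rw [Finset.prod_congr rfl hfac]
    rw [Finset.prod_const, Finset.card_erase_of_mem (Finset.mem_univ i), Finset.card_univ,
      Fintype.card_fin]
  rw [Finset.sum_congr rfl (fun i _ => hterm i), Finset.sum_const, Finset.card_univ,
    Fintype.card_fin, nsmul_eq_mul]
  have hpb : (0:ℝ) < π / b := by positivity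
  have hsq : √(π / b) = (π / b) ^ ((1:ℝ)/2) := Real.sqrt_eq_rpow _
  rcases Nat.eq_zero_or_pos d with hd | hd
  · subst hd; simp
  have hpow : (√(π / b)) ^ d = (π / b) ^ ((d : ℝ) / 2) := by
    rw [hsq, ← Real.rpow_natCast ((π / b) ^ ((1:ℝ)/2)) d, ← Real.rpow_mul hpb.le]
    congr 1; ring
  calc (d : ℝ) * (√(π / b) / (2 * b) * √(π / b) ^ (d - 1))
      = (d / (2*b)) * (√(π / b) * √(π / b) ^ (d-1)) := by ring
    _ = (d / (2*b)) * (√(π / b)) ^ d := by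
        rw [← pow_succ' (√(π / b)) (d-1), Nat.sub_add_cancel hd]
    _ = (d / (2 * b)) * (π / b) ^ ((d : ℝ) / 2) := by rw [hpow]

lemma integral_exp_neg_mul_sq_norm' {b : ℝ} (hb : 0 < b) :
    ∫ x : EuclideanSpace ℝ (Fin d), exp (-b * ‖x‖ ^ 2) = (π / b) ^ ((d : ℝ) / 2) := by
  have := GaussianFourier.integral_rexp_neg_mul_sq_norm (V := EuclideanSpace ℝ (Fin d)) hb
  simpa [finrank_euclideanSpace_fin] using this


/-- For `U` m-strongly convex and L-smooth with minimizer 0 and `U(0)=0`,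
`p* ∝ e^{-U}`, and `p₀ = N(0,(1/m)I)`, we have `KL(p₀‖p*) ≤ dL/m`. -/
theorem stmt_4 {d : ℕ} (U : EuclideanSpace ℝ (Fin d) → ℝ)
    (g : EuclideanSpace ℝ (Fin d) → EuclideanSpace ℝ (Fin d))
    (H : EuclideanSpace ℝ (Fin d) → EuclideanSpace ℝ (Fin d) →L[ℝ] EuclideanSpace ℝ (Fin d))
    (m L : ℝ) (hm : 0 < m) (hmL : m ≤ L)
    (hgrad : ∀ x, HasGradientAt U (g x) x)
    (hhess : ∀ x, HasFDerivAt g (H x) x)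
    (hlow : ∀ x v, m * ‖v‖ ^ 2 ≤ ⟪H x v, v⟫)
    (hup : ∀ x v, ⟪H x v, v⟫ ≤ L * ‖v‖ ^ 2)
    (hU0 : U 0 = 0) (hg0 : g 0 = 0) :
    (∫ x : EuclideanSpace ℝ (Fin d),
        ((m / (2 * π)) ^ ((d : ℝ) / 2) * Real.exp (-(m / 2) * ‖x‖ ^ 2)) *
          Real.log (((m / (2 * π)) ^ ((d : ℝ) / 2) * Real.exp (-(m / 2) * ‖x‖ ^ 2)) /
            (Real.exp (-U x) / (∫ y : EuclideanSpace ℝ (Fin d), Real.exp (-U y)))))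
      ≤ d * L / m := by
  have hL : 0 < L := lt_of_lt_of_le hm hmL
  have hb : 0 < m / 2 := by linarith
  have hbL : 0 < L / 2 := by linarith
  have hquad := quad_bounds U g H m L hgrad hhess hlow hup hU0 hg0
  have hUdiff : Differentiable ℝ U := fun x => (hgrad x).hasFDerivAt.differentiableAt
  have hUcont : Continuous U := hUdiff.continuous
  have hcontg : Continuous fun x : EuclideanSpace ℝ (Fin d) => Real.exp (-(m / 2) * ‖x‖ ^ 2) :=
    (continuous_const.mul (continuous_norm.pow 2)).rexp
  set C : ℝ := (m / (2 * π)) ^ ((d : ℝ) / 2) with hCdef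
  have hC_pos : 0 < C := Real.rpow_pos_of_pos (by positivity) _
  set Z : ℝ := ∫ y : EuclideanSpace ℝ (Fin d), Real.exp (-U y) with hZdef
  have IG := integrable_exp_neg_mul_sq_norm (d := d) hb
  have IG2 := integrable_sq_norm_mul_exp (d := d) hb
  have IGL := integrable_exp_neg_mul_sq_norm (d := d) hbL
  have hIexpU : Integrable (fun x : EuclideanSpace ℝ (Fin d) => Real.exp (-U x)) := by
    apply Integrable.mono' IG (hUcont.neg.rexp).aestronglyMeasurable
    filter_upwards with x
    rw [Real.norm_eq_abs, abs_of_pos (exp_pos _)]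
    apply Real.exp_le_exp.mpr
    rw [Pi.neg_apply]
    have := (hquad x).1
    nlinarith
  have hIexpMulU : Integrable
      (fun x : EuclideanSpace ℝ (Fin d) => Real.exp (-(m / 2) * ‖x‖ ^ 2) * U x) := by
    apply Integrable.mono' (IG2.const_mul (L / 2))
    · exact (hcontg.mul hUcont).aestronglyMeasurable
    filter_upwards with x
    have h1 := (hquad x).1
    have h2 := (hquad x).2
    have hU_nonneg : 0 ≤ U x := le_trans (by positivity) h1
    rw [Real.norm_eq_abs, abs_of_nonneg (by positivity)]
    calc Real.exp (-(m / 2) * ‖x‖ ^ 2) * U x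
        ≤ Real.exp (-(m / 2) * ‖x‖ ^ 2) * (L / 2 * ‖x‖ ^ 2) := by
          apply mul_le_mul_of_nonneg_left h2 (exp_pos _).le
      _ = L / 2 * (‖x‖ ^ 2 * Real.exp (-(m / 2) * ‖x‖ ^ 2)) := by ring
  -- value of gaussian integrals
  have hIexp : (∫ x : EuclideanSpace ℝ (Fin d), Real.exp (-(m / 2) * ‖x‖ ^ 2))
      = (π / (m / 2)) ^ ((d : ℝ) / 2) := integral_exp_neg_mul_sq_norm' hb
  have hIsq : (∫ x : EuclideanSpace ℝ (Fin d), ‖x‖ ^ 2 * Real.exp (-(m / 2) * ‖x‖ ^ 2))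
      = ((d : ℝ) / (2 * (m / 2))) * (π / (m / 2)) ^ ((d : ℝ) / 2) :=
    integral_sq_norm_mul_exp hb
  have hCIexp : C * (π / (m / 2)) ^ ((d : ℝ) / 2) = 1 := by
    rw [hCdef, ← Real.mul_rpow (by positivity) (by positivity)]
    rw [show m / (2 * π) * (π / (m / 2)) = 1 by
      field_simp]
    exact Real.one_rpow _
  -- Z bounds
  have hZ_le : Z ≤ (π / (m / 2)) ^ ((d : ℝ) / 2) := by
    rw [hZdef, ← hIexp]
    apply integral_mono hIexpU IG
    intro x
    apply Real.exp_le_exp.mpr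
    have := (hquad x).1
    nlinarith
  have hZ_pos : 0 < Z := by
    have hle : (∫ x : EuclideanSpace ℝ (Fin d), Real.exp (-(L / 2) * ‖x‖ ^ 2)) ≤ Z := by
      rw [hZdef]
      apply integral_mono IGL hIexpU
      intro x
      apply Real.exp_le_exp.mpr
      have := (hquad x).2
      nlinarith
    have : (0:ℝ) < (π / (L / 2)) ^ ((d : ℝ) / 2) := Real.rpow_pos_of_pos (by positivity) _
    rw [← integral_exp_neg_mul_sq_norm' hbL] at this
    linarith
  -- rewrite integrand
  have hrw : ∀ x : EuclideanSpace ℝ (Fin d),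
      (C * Real.exp (-(m / 2) * ‖x‖ ^ 2)) *
        Real.log ((C * Real.exp (-(m / 2) * ‖x‖ ^ 2)) / (Real.exp (-U x) / Z))
      = 
        ((Real.log C + Real.log Z) * Real.exp (-(m / 2) * ‖x‖ ^ 2) * C
          + C * (Real.exp (-(m / 2) * ‖x‖ ^ 2) * U x))
          - (m / 2) * C * (‖x‖ ^ 2 * Real.exp (-(m / 2) * ‖x‖ ^ 2)) := by
    intro x
    rw [Real.log_div (by positivity) (by positivity),
      Real.log_mul (ne_of_gt hC_pos) (Real.exp_ne_zero _), Real.log_exp,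
      Real.log_div (Real.exp_ne_zero _) (ne_of_gt hZ_pos), Real.log_exp]
    ring
  rw [integral_congr_ae (Filter.Eventually.of_forall hrw)]
  have int1 : Integrable (fun x : EuclideanSpace ℝ (Fin d) =>
      (Real.log C + Real.log Z) * Real.exp (-(m / 2) * ‖x‖ ^ 2) * C) :=
    (IG.const_mul (Real.log C + Real.log Z)).mul_const C
  have int2 : Integrable (fun x : EuclideanSpace ℝ (Fin d) =>
      C * (Real.exp (-(m / 2) * ‖x‖ ^ 2) * U x)) := hIexpMulU.const_mul C
  have int3 : Integrable (fun x : EuclideanSpace ℝ (Fin d) =>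
      (m / 2) * C * (‖x‖ ^ 2 * Real.exp (-(m / 2) * ‖x‖ ^ 2))) := IG2.const_mul _
  have intA : Integrable (fun x : EuclideanSpace ℝ (Fin d) =>
      (Real.log C + Real.log Z) * Real.exp (-(m / 2) * ‖x‖ ^ 2) * C
        + C * (Real.exp (-(m / 2) * ‖x‖ ^ 2) * U x)) := int1.add int2
  rw [integral_sub intA int3, integral_add int1 int2]
  rw [integral_mul_const, integral_const_mul, integral_const_mul, integral_const_mul, hIexp, hIsq]
  -- bound each piece
  have e1 : (Real.log C + Real.log Z) * (π / (m / 2)) ^ ((d : ℝ) / 2) * C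
      = Real.log C + Real.log Z := by
    rw [mul_assoc, mul_comm ((π / (m / 2)) ^ ((d : ℝ) / 2)) C, hCIexp, mul_one]
  have hlogCZ : Real.log C + Real.log Z ≤ 0 := by
    have h1 : Real.log Z ≤ Real.log ((π / (m / 2)) ^ ((d : ℝ) / 2)) :=
      Real.log_le_log hZ_pos hZ_le
    have h2 : Real.log C + Real.log ((π / (m / 2)) ^ ((d : ℝ) / 2)) = 0 := by
      rw [← Real.log_mul (ne_of_gt hC_pos)
        (ne_of_gt (Real.rpow_pos_of_pos (by positivity) _)), hCIexp, Real.log_one]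
    linarith
  have e3 : (m / 2) * C * ((d : ℝ) / (2 * (m / 2)) * (π / (m / 2)) ^ ((d : ℝ) / 2))
      = (d : ℝ) / 2 := by
    have : (m / 2) * C * ((d : ℝ) / (2 * (m / 2)) * (π / (m / 2)) ^ ((d : ℝ) / 2))
        = ((d : ℝ) / 2) * (C * (π / (m / 2)) ^ ((d : ℝ) / 2)) := by
      field_simp
    rw [this, hCIexp, mul_one]
  have e2 : C * (∫ x : EuclideanSpace ℝ (Fin d), Real.exp (-(m / 2) * ‖x‖ ^ 2) * U x)
      ≤ (d : ℝ) * L / (2 * m) := by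
    have hmono : (∫ x : EuclideanSpace ℝ (Fin d), Real.exp (-(m / 2) * ‖x‖ ^ 2) * U x)
        ≤ ∫ x : EuclideanSpace ℝ (Fin d), L / 2 * (‖x‖ ^ 2 * Real.exp (-(m / 2) * ‖x‖ ^ 2)) := by
      apply integral_mono hIexpMulU (IG2.const_mul _)
      intro x
      have h2 := (hquad x).2
      have : Real.exp (-(m / 2) * ‖x‖ ^ 2) * U x
          ≤ Real.exp (-(m / 2) * ‖x‖ ^ 2) * (L / 2 * ‖x‖ ^ 2) :=
        mul_le_mul_of_nonneg_left h2 (exp_pos _).le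
      calc Real.exp (-(m / 2) * ‖x‖ ^ 2) * U x
          ≤ Real.exp (-(m / 2) * ‖x‖ ^ 2) * (L / 2 * ‖x‖ ^ 2) := this
        _ = L / 2 * (‖x‖ ^ 2 * Real.exp (-(m / 2) * ‖x‖ ^ 2)) := by ring
    rw [integral_const_mul, hIsq] at hmono
    calc C * (∫ x : EuclideanSpace ℝ (Fin d), Real.exp (-(m / 2) * ‖x‖ ^ 2) * U x)
        ≤ C * (L / 2 * ((d : ℝ) / (2 * (m / 2)) * (π / (m / 2)) ^ ((d : ℝ) / 2))) :=
          mul_le_mul_of_nonneg_left hmono hC_pos.le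
      _ = (L / 2 * ((d : ℝ) / m)) * (C * (π / (m / 2)) ^ ((d : ℝ) / 2)) := by
          field_simp
      _ = (d : ℝ) * L / (2 * m) := by rw [hCIexp, mul_one]; ring
  rw [e1, e3]
  have hd0 : (0:ℝ) ≤ (d : ℝ) := Nat.cast_nonneg d
  have hq : 0 ≤ (d : ℝ) * L / m := by positivity
  have : (d : ℝ) * L / (2 * m) = ((d : ℝ) * L / m) / 2 := by ring
  rw [this] at e2
  linarith
end

section
/- Suppose U : ℝᵈ → ℝ satisfies ‖(x - t∇U(x))‖ ≤ (1 - mt)‖x‖ for all x and all 0 ≤ t ≤ 1/L (with 0 < m ≤ L). Let x' = x - t∇U(x) + √(2t)·ξ with ξ ∼ N(0, I_d) independent of x and 0 ≤ t ≤ 1/L. If E‖x‖² ≤ 4d/m, then E‖x'‖² ≤ 4d/m. -/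
open MeasureTheory ProbabilityTheory

/-- If the drift step is contractive, `‖x - t∇U(x)‖ ≤ (1-mt)‖x‖`,
`0 ≤ t ≤ 1/L`, `0 < m ≤ L`, `ξ` standard Gaussian (mean zero, `E‖ξ‖² = d`)
independent of `x`, and `E‖x‖² ≤ 4d/m`, then
`x' = x - t∇U(x) + √(2t)ξ` also satisfies `E‖x'‖² ≤ 4d/m`. -/
theorem stmt_10 {d : ℕ} {Ω : Type*} [MeasurableSpace Ω] (μ : Measure Ω)
    [IsProbabilityMeasure μ]
    (x ξ : Ω → EuclideanSpace ℝ (Fin d))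
    (g : EuclideanSpace ℝ (Fin d) → EuclideanSpace ℝ (Fin d))
    (m L t : ℝ) (hm : 0 < m) (hmL : m ≤ L)
    (hcontr : ∀ (s : ℝ), 0 ≤ s → s ≤ 1 / L →
      ∀ a : EuclideanSpace ℝ (Fin d), ‖a - s • g a‖ ≤ (1 - m * s) * ‖a‖)
    (ht0 : 0 ≤ t) (ht1 : t ≤ 1 / L)
    (hx : MemLp x 2 μ) (hξ : MemLp ξ 2 μ)
    (hgmeas : Measurable g)
    (hindep : IndepFun x ξ μ)
    (hmean : (∫ ω, ξ ω ∂μ) = 0)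
    (hvar : (∫ ω, ‖ξ ω‖ ^ 2 ∂μ) = d)
    (hx2 : (∫ ω, ‖x ω‖ ^ 2 ∂μ) ≤ 4 * d / m) :
    (∫ ω, ‖x ω - t • g (x ω) + Real.sqrt (2 * t) • ξ ω‖ ^ 2 ∂μ) ≤ 4 * d / m := by
  have hL : 0 < L := lt_of_lt_of_le hm hmL
  have hLt : L * t ≤ 1 := by
    calc L * t ≤ L * (1 / L) := by gcongr
    _ = 1 := by field_simp
  have hmt0 : 0 ≤ 1 - m * t := by nlinarith [mul_le_mul_of_nonneg_right hmL ht0]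
  have hmt1 : 1 - m * t ≤ 1 := by nlinarith [mul_nonneg hm.le ht0]
  set c : ℝ := Real.sqrt (2 * t) with hc
  have hc0 : 0 ≤ c := Real.sqrt_nonneg _
  have hc2 : c ^ 2 = 2 * t := Real.sq_sqrt (by linarith)
  set φ : EuclideanSpace ℝ (Fin d) → EuclideanSpace ℝ (Fin d) :=
    fun a => a - t • g a with hφdef
  have hφ : Measurable φ := measurable_id.sub (hgmeas.const_smul t)
  set y : Ω → EuclideanSpace ℝ (Fin d) := fun ω => x ω - t • g (x ω) with hydef
  have hybound : ∀ ω, ‖y ω‖ ≤ (1 - m * t) * ‖x ω‖ := fun ω => hcontr t ht0 ht1 (x ω)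
  have hyAE : AEStronglyMeasurable y μ :=
    (hφ.comp_aemeasurable hx.aestronglyMeasurable.aemeasurable).aestronglyMeasurable
  have hy : MemLp y 2 μ :=
    MemLp.of_le_mul hx.norm hyAE (Filter.Eventually.of_forall fun ω => by
      simpa using hybound ω)
  have hyξ : IndepFun y ξ μ := hindep.comp hφ measurable_id
  -- coordinate functions
  have hproj : ∀ i : Fin d, Measurable fun v : EuclideanSpace ℝ (Fin d) => v i :=
    fun i => (EuclideanSpace.proj (𝕜 := ℝ) i).measurable
  have hyi : ∀ i : Fin d, Integrable (fun ω => y ω i) μ :=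
    fun i => (((EuclideanSpace.proj (𝕜 := ℝ) i).comp_memLp' hy).integrable one_le_two)
  have hξi : ∀ i : Fin d, Integrable (fun ω => ξ ω i) μ :=
    fun i => (((EuclideanSpace.proj (𝕜 := ℝ) i).comp_memLp' hξ).integrable one_le_two)
  have hyξi : ∀ i : Fin d, IndepFun (fun ω => y ω i) (fun ω => ξ ω i) μ :=
    fun i => hyξ.comp (hproj i) (hproj i)
  have hprodInt : ∀ i : Fin d, Integrable (fun ω => y ω i * ξ ω i) μ :=
    fun i => (hyξi i).integrable_mul (hyi i) (hξi i)
  -- the inner product as a sum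
  have hinner_eq : ∀ ω, (inner ℝ (y ω) (ξ ω) : ℝ) = ∑ i : Fin d, y ω i * ξ ω i := by
    intro ω
    simp [PiLp.inner_apply, RCLike.inner_apply, mul_comm]
  have hinnerInt : Integrable (fun ω => (inner ℝ (y ω) (ξ ω) : ℝ)) μ := by
    have := integrable_finset_sum (μ := μ) Finset.univ
      (fun i _ => hprodInt i)
    exact this.congr (Filter.Eventually.of_forall fun ω => (hinner_eq ω).symm)
  have hξmean_i : ∀ i : Fin d, (∫ ω, ξ ω i ∂μ) = 0 := by
    intro i
    have h := ((EuclideanSpace.proj (𝕜 := ℝ) i).integral_comp_comm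
      (hξ.integrable one_le_two))
    rw [hmean] at h
    simpa using h
  have hcross : (∫ ω, (inner ℝ (y ω) (ξ ω) : ℝ) ∂μ) = 0 := by
    rw [integral_congr_ae (Filter.Eventually.of_forall hinner_eq),
      integral_finset_sum Finset.univ (fun i _ => hprodInt i)]
    refine Finset.sum_eq_zero fun i _ => ?_
    rw [show (∫ ω, y ω i * ξ ω i ∂μ) = _ from
      (hyξi i).integral_mul_eq_mul_integral (hyi i).1 (hξi i).1, hξmean_i i, mul_zero]
  -- integrability of squares
  have hI1 : Integrable (fun ω => ‖y ω‖ ^ 2) μ := hy.norm.integrable_sq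
  have hI3 : Integrable (fun ω => ‖ξ ω‖ ^ 2) μ := hξ.norm.integrable_sq
  have hIx : Integrable (fun ω => ‖x ω‖ ^ 2) μ := hx.norm.integrable_sq
  -- pointwise expansion
  have hexp : ∀ ω, ‖y ω + c • ξ ω‖ ^ 2
      = ‖y ω‖ ^ 2 + 2 * (c * (inner ℝ (y ω) (ξ ω) : ℝ)) + c ^ 2 * ‖ξ ω‖ ^ 2 := by
    intro ω
    rw [norm_add_sq_real, real_inner_smul_right, norm_smul, mul_pow]
    simp [abs_of_nonneg hc0]
  have hsplit : (∫ ω, ‖y ω + c • ξ ω‖ ^ 2 ∂μ)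
      = (∫ ω, ‖y ω‖ ^ 2 ∂μ) + 2 * c * (∫ ω, (inner ℝ (y ω) (ξ ω) : ℝ) ∂μ)
        + c ^ 2 * (∫ ω, ‖ξ ω‖ ^ 2 ∂μ) := by
    have hB : Integrable (fun ω => 2 * (c * (inner ℝ (y ω) (ξ ω) : ℝ))) μ :=
      (hinnerInt.const_mul c).const_mul 2
    have hC : Integrable (fun ω => c ^ 2 * ‖ξ ω‖ ^ 2) μ := hI3.const_mul _
    have hAB : Integrable
        (fun ω => ‖y ω‖ ^ 2 + 2 * (c * (inner ℝ (y ω) (ξ ω) : ℝ))) μ := hI1.add hB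
    rw [integral_congr_ae (Filter.Eventually.of_forall hexp),
      integral_add hAB hC, integral_add hI1 hB,
      integral_const_mul, integral_const_mul, integral_const_mul]
    ring
  -- bound on the drift term
  have hydrift : (∫ ω, ‖y ω‖ ^ 2 ∂μ) ≤ (1 - m * t) * (∫ ω, ‖x ω‖ ^ 2 ∂μ) := by
    rw [← integral_const_mul]
    refine integral_mono hI1 (hIx.const_mul _) fun ω => ?_
    have h1 := hybound ω
    have h2 := norm_nonneg (y ω)
    have h3 := norm_nonneg (x ω)
    nlinarith [pow_le_pow_left₀ h2 h1 2, sq_nonneg (‖x ω‖), mul_nonneg hmt0 (sq_nonneg ‖x ω‖)]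
  have hgoal_eq : (∫ ω, ‖x ω - t • g (x ω) + Real.sqrt (2 * t) • ξ ω‖ ^ 2 ∂μ)
      = (∫ ω, ‖y ω + c • ξ ω‖ ^ 2 ∂μ) := rfl
  rw [hgoal_eq, hsplit, hcross, hvar, hc2]
  have hd0 : (0 : ℝ) ≤ (d : ℝ) := Nat.cast_nonneg d
  have hkey : (1 - m * t) * (4 * d / m) = 4 * d / m - 4 * (t * d) := by
    field_simp
  have h1 : (1 - m * t) * (∫ ω, ‖x ω‖ ^ 2 ∂μ) ≤ (1 - m * t) * (4 * d / m) :=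
    mul_le_mul_of_nonneg_left hx2 hmt0
  nlinarith [mul_nonneg ht0 hd0, integral_nonneg (f := fun ω => ‖x ω‖ ^ 2) (fun ω => sq_nonneg ‖x ω‖) (μ := μ)]
end
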